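/- For the zero-modified geometric prior with parameter ρ_α → 0, the weighted log-prior sum satisfies ∑_{k=0}^∞ |log ω_k|^r ω_k ≤ ω₀|log ω₀|^r + (1−ω₀)[|log(1−ω₀)|^r + |log ρ_α|^r + |log(1−ρ_α)|^r/ρ_α]·C_r for a constant C_r depending only on r≥1 (via the inequality |a+b+c|^r ≤ 3^{r−1}(|a|^r+|b|^r+|c|^r)), and consequently if |log ρ_α|/|log α| → 0 as α→0 then ∑_k |log ω_k^α|^r ω_k^α / |log α|^r → 0. -/

import Mathlib

open Filter

noncomputable def zmGeom (ω₀ ρ : ℝ) : ℕ → ℝ :=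
  fun k => if k = 0 then ω₀ else (1 - ω₀) * ρ * (1 - ρ) ^ (k - 1)

lemma aux_xrexp (r : ℝ) (hr : 1 ≤ r) (x : ℝ) (hx : 0 ≤ x) :
    x ^ r * Real.exp (-x) ≤ (r / Real.exp 1) ^ r := by
  have hr0 : (0:ℝ) < r := lt_of_lt_of_le one_pos hr
  have hre : 0 < r / Real.exp 1 := div_pos hr0 (Real.exp_pos 1)
  rcases eq_or_lt_of_le hx with h | h
  · rw [← h, Real.zero_rpow (ne_of_gt hr0), zero_mul]
    exact le_of_lt (Real.rpow_pos_of_pos hre r)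
  · have h1 : Real.log (x / r) ≤ x / r - 1 := Real.log_le_sub_one_of_pos (div_pos h hr0)
    rw [Real.log_div (ne_of_gt h) (ne_of_gt hr0)] at h1
    have h2 : Real.log x * r + (-x) ≤ Real.log (r / Real.exp 1) * r := by
      rw [Real.log_div (ne_of_gt hr0) (ne_of_gt (Real.exp_pos 1)), Real.log_exp]
      nlinarith [mul_le_mul_of_nonneg_left h1 hr0.le, mul_div_cancel₀ x (ne_of_gt hr0)]
    calc x ^ r * Real.exp (-x) = Real.exp (Real.log x * r + (-x)) := by
          rw [Real.exp_add, Real.rpow_def_of_pos h]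
      _ ≤ Real.exp (Real.log (r / Real.exp 1) * r) := Real.exp_le_exp.mpr h2
      _ = (r / Real.exp 1) ^ r := (Real.rpow_def_of_pos hre r).symm

lemma aux_add3 (r a b c : ℝ) (hr : 1 ≤ r) (ha : 0 ≤ a) (hb : 0 ≤ b) (hc : 0 ≤ c) :
    (a + b + c) ^ r ≤ 3 ^ r * (a ^ r + b ^ r + c ^ r) := by
  have hr0 : (0:ℝ) ≤ r := le_trans zero_le_one hr
  set M := max a (max b c) with hM
  have hMa : a ≤ M := le_max_left _ _
  have hMb : b ≤ M := le_trans (le_max_left _ _) (le_max_right _ _)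
  have hMc : c ≤ M := le_trans (le_max_right _ _) (le_max_right _ _)
  have hM0 : 0 ≤ M := le_trans ha hMa
  have h1 : (a + b + c) ^ r ≤ (3 * M) ^ r :=
    Real.rpow_le_rpow (by positivity) (by linarith) hr0
  rw [Real.mul_rpow (by norm_num) hM0] at h1
  have h3 : M ^ r ≤ a ^ r + b ^ r + c ^ r := by
    have hra := Real.rpow_nonneg ha r
    have hrb := Real.rpow_nonneg hb r
    have hrc := Real.rpow_nonneg hc r
    rcases max_choice a (max b c) with h | h
    · rw [hM, h]; linarith
    · rcases max_choice b c with h' | h' <;> rw [hM, h, h'] <;> linarith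
  calc (a + b + c) ^ r ≤ 3 ^ r * M ^ r := h1
    _ ≤ 3 ^ r * (a ^ r + b ^ r + c ^ r) :=
        mul_le_mul_of_nonneg_left h3 (Real.rpow_nonneg (by norm_num) r)

lemma zm_nonneg (ω₀ ρ : ℝ) (h0 : 0 < ω₀) (h1 : ω₀ < 1) (h2 : 0 < ρ) (h3 : ρ < 1) (k : ℕ) :
    0 ≤ zmGeom ω₀ ρ k := by
  unfold zmGeom
  split
  · linarith
  · have : (0:ℝ) ≤ (1 - ρ) ^ (k - 1) := pow_nonneg (by linarith) _
    exact mul_nonneg (mul_nonneg (by linarith) (by linarith)) this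

lemma div_le_div_of_nonneg_right'' {a b c : ℝ} (h : a ≤ b) (hc : 0 < c) : a / c ≤ b / c :=
  (div_le_div_iff_of_pos_right hc).mpr h

lemma aux_comb (q a b e k : ℝ) (hq : 0 ≤ q) (ha : 0 ≤ a) (hk : k ≤ q * (b + e))
    (he : 0 ≤ e) : a + b + k ≤ (1 + q) * (a + b + e) := by nlinarith

set_option maxHeartbeats 1000000 in
lemma key (r : ℝ) (hr : 1 ≤ r) :
    ∃ C > 0, ∀ ω₀ ρ : ℝ, 0 < ω₀ → ω₀ < 1 → 0 < ρ → ρ < 1 →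
      ∑' k : ℕ, |Real.log (zmGeom ω₀ ρ k)| ^ r * zmGeom ω₀ ρ k
        ≤ ω₀ * |Real.log ω₀| ^ r +
          (1 - ω₀) * C *
            (|Real.log (1 - ω₀)| ^ r + |Real.log ρ| ^ r + |Real.log (1 - ρ)| ^ r / ρ) := by
  have hr0 : (0:ℝ) < r := lt_of_lt_of_le one_pos hr
  set K : ℝ := 2 * (2 * r / Real.exp 1) ^ r with hKdef
  have hK0 : 0 < K := by
    have : 0 < 2 * r / Real.exp 1 := by positivity
    positivity
  have hL2 : (0:ℝ) < Real.log 2 ^ r := Real.rpow_pos_of_pos (Real.log_pos one_lt_two) r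
  refine ⟨3 ^ r * (1 + K / Real.log 2 ^ r), by positivity, ?_⟩
  intro ω₀ ρ hω0 hω1 hρ0 hρ1
  have h1ω : (0:ℝ) < 1 - ω₀ := by linarith
  have h1ρ : (0:ℝ) < 1 - ρ := by linarith
  set A := |Real.log (1 - ω₀)| with hA
  set B := |Real.log ρ| with hB
  set D := |Real.log (1 - ρ)| with hDdef
  have hlogρneg : Real.log (1 - ρ) < 0 := Real.log_neg h1ρ (by linarith)
  have hD : Real.log (1 - ρ) = -D := by rw [hDdef, abs_of_neg hlogρneg, neg_neg]
  have hD0 : 0 < D := by rw [hDdef, abs_of_neg hlogρneg]; linarith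
  set s := Real.exp (-(D / 2)) with hs
  have hs0 : 0 < s := Real.exp_pos _
  have hs1 : s < 1 := Real.exp_lt_one_iff.mpr (by linarith)
  have hsq : s * s = 1 - ρ := by
    rw [hs, ← Real.exp_add]
    have : -(D/2) + -(D/2) = Real.log (1 - ρ) := by rw [hD]; ring
    rw [this, Real.exp_log h1ρ]
  -- the function
  set f : ℕ → ℝ := fun k => |Real.log (zmGeom ω₀ ρ k)| ^ r * zmGeom ω₀ ρ k with hf
  have hfnn : ∀ k, 0 ≤ f k := fun k =>
    mul_nonneg (Real.rpow_nonneg (abs_nonneg _) r) (zm_nonneg ω₀ ρ hω0 hω1 hρ0 hρ1 k)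
  have hzm : ∀ m : ℕ, zmGeom ω₀ ρ (m + 1) = (1 - ω₀) * ρ * (1 - ρ) ^ m := by
    intro m; simp [zmGeom]
  -- key exponential estimate
  have hexp : ∀ m : ℕ, ((m : ℝ) * D) ^ r * (1 - ρ) ^ m ≤ (2 * r / Real.exp 1) ^ r * s ^ m := by
    intro m
    have hmD : (0:ℝ) ≤ (m : ℝ) * D / 2 := by positivity
    have h1 := aux_xrexp r hr ((m : ℝ) * D / 2) hmD
    have hpow : (1 - ρ) ^ m = Real.exp (-((m:ℝ) * D / 2)) * s ^ m := by
      have e1 : (1 - ρ) ^ m = Real.exp ((m:ℝ) * Real.log (1 - ρ)) := by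
        rw [Real.exp_nat_mul, Real.exp_log h1ρ]
      have e2 : s ^ m = Real.exp ((m:ℝ) * (-(D/2))) := by rw [Real.exp_nat_mul]
      rw [e1, e2, ← Real.exp_add, hD]; ring_nf
    have hsplit : ((m : ℝ) * D) ^ r = 2 ^ r * ((m:ℝ) * D / 2) ^ r := by
      rw [← Real.mul_rpow (by norm_num) hmD]; ring_nf
    have h2r : (2:ℝ) ^ r * (r / Real.exp 1) ^ r = (2 * r / Real.exp 1) ^ r := by
      rw [← Real.mul_rpow (by norm_num) (by positivity)]; ring_nf
    calc ((m : ℝ) * D) ^ r * (1 - ρ) ^ m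
        = 2 ^ r * (((m:ℝ) * D / 2) ^ r * Real.exp (-((m:ℝ) * D / 2))) * s ^ m := by
          rw [hpow, hsplit]; ring
      _ ≤ 2 ^ r * (r / Real.exp 1) ^ r * s ^ m := by
          have h2 : (0:ℝ) ≤ 2 ^ r := Real.rpow_nonneg (by norm_num) r
          have hsm : (0:ℝ) ≤ s ^ m := pow_nonneg hs0.le m
          nlinarith [mul_le_mul_of_nonneg_left h1 h2]
      _ = (2 * r / Real.exp 1) ^ r * s ^ m := by rw [h2r]
  -- per-term bound
  set bound : ℕ → ℝ := fun m =>
    (3 ^ r * ((1 - ω₀) * ρ) * (A ^ r + B ^ r)) * (1 - ρ) ^ m +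
      (3 ^ r * ((1 - ω₀) * ρ)) * (((m : ℝ) * D) ^ r * (1 - ρ) ^ m) with hbd
  have hterm : ∀ m : ℕ, f (m + 1) ≤ bound m := by
    intro m
    have hw : zmGeom ω₀ ρ (m + 1) = (1 - ω₀) * ρ * (1 - ρ) ^ m := hzm m
    have hwpos : 0 < (1 - ω₀) * ρ * (1 - ρ) ^ m := by positivity
    have hlogeq : Real.log (zmGeom ω₀ ρ (m + 1)) =
        Real.log (1 - ω₀) + Real.log ρ + (m : ℝ) * Real.log (1 - ρ) := by
      rw [hw, Real.log_mul (by positivity) (by positivity),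
        Real.log_mul (ne_of_gt h1ω) (ne_of_gt hρ0), Real.log_pow]
    have habs : |Real.log (zmGeom ω₀ ρ (m + 1))| ≤ A + B + (m : ℝ) * D := by
      rw [hlogeq]
      calc |Real.log (1 - ω₀) + Real.log ρ + (m : ℝ) * Real.log (1 - ρ)|
          ≤ |Real.log (1 - ω₀) + Real.log ρ| + |(m : ℝ) * Real.log (1 - ρ)| := abs_add_le _ _
        _ ≤ A + B + (m : ℝ) * D := by
            rw [abs_mul, Nat.abs_cast]
            exact add_le_add (abs_add_le _ _) le_rfl
    have hmono : |Real.log (zmGeom ω₀ ρ (m + 1))| ^ r ≤ (A + B + (m : ℝ) * D) ^ r :=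
      Real.rpow_le_rpow (abs_nonneg _) habs hr0.le
    have h3 : (A + B + (m : ℝ) * D) ^ r ≤ 3 ^ r * (A ^ r + B ^ r + ((m : ℝ) * D) ^ r) :=
      aux_add3 r A B ((m : ℝ) * D) hr (abs_nonneg _) (abs_nonneg _) (by positivity)
    have : f (m + 1) ≤ 3 ^ r * (A ^ r + B ^ r + ((m : ℝ) * D) ^ r) *
        ((1 - ω₀) * ρ * (1 - ρ) ^ m) := by
      rw [hf]
      simp only
      rw [hw]
      exact mul_le_mul (le_trans hmono h3) le_rfl hwpos.le (by positivity)
    calc f (m + 1) ≤ 3 ^ r * (A ^ r + B ^ r + ((m : ℝ) * D) ^ r) *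
          ((1 - ω₀) * ρ * (1 - ρ) ^ m) := this
      _ = bound m := by rw [hbd]; ring
  -- summability
  have hsumgeo : Summable (fun m : ℕ => (1 - ρ) ^ m) :=
    summable_geometric_of_lt_one h1ρ.le (by linarith)
  have hsums : Summable (fun m : ℕ => s ^ m) := summable_geometric_of_lt_one hs0.le hs1
  have hsumP : Summable (fun m : ℕ => ((m : ℝ) * D) ^ r * (1 - ρ) ^ m) :=
    Summable.of_nonneg_of_le (fun m => by positivity) hexp (hsums.mul_left _)
  have hsumbound : Summable bound := ((hsumgeo.mul_left _).add (hsumP.mul_left _))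
  have hsumf : Summable f := by
    rw [← summable_nat_add_iff 1]
    exact Summable.of_nonneg_of_le (fun m => hfnn (m + 1)) hterm hsumbound
  -- sum estimates
  have hgeosum : ∑' m : ℕ, (1 - ρ) ^ m = ρ⁻¹ := by
    rw [tsum_geometric_of_lt_one h1ρ.le (by linarith)]; ring_nf
  have hP : ∑' m : ℕ, ((m : ℝ) * D) ^ r * (1 - ρ) ^ m ≤ (2 * r / Real.exp 1) ^ r * (1 - s)⁻¹ := by
    calc ∑' m : ℕ, ((m : ℝ) * D) ^ r * (1 - ρ) ^ m
        ≤ ∑' m : ℕ, (2 * r / Real.exp 1) ^ r * s ^ m :=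
          Summable.tsum_le_tsum hexp hsumP (hsums.mul_left _)
      _ = (2 * r / Real.exp 1) ^ r * (1 - s)⁻¹ := by
          rw [tsum_mul_left, tsum_geometric_of_lt_one hs0.le hs1]
  have hinv : (1 - s)⁻¹ ≤ 2 / ρ := by
    have h2 : ρ / 2 ≤ 1 - s := by nlinarith [sq_nonneg (1 - s)]
    have h4 : (0:ℝ) < 1 - s := by linarith [lt_of_lt_of_le (by positivity : (0:ℝ) < ρ/2) h2]
    have h3 : (0:ℝ) < ρ / 2 := by positivity
    calc (1 - s)⁻¹ ≤ (ρ / 2)⁻¹ := inv_anti₀ h3 h2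
      _ = 2 / ρ := by rw [inv_div]
  have hsumshift : Summable (fun m : ℕ => f (m + 1)) := (summable_nat_add_iff 1).mpr hsumf
  have hboundsum : ∑' m : ℕ, bound m ≤ 3 ^ r * (1 - ω₀) * (A ^ r + B ^ r + K) := by
    have e1 : ∑' m : ℕ, bound m =
        (3 ^ r * ((1 - ω₀) * ρ) * (A ^ r + B ^ r)) * ρ⁻¹ +
          (3 ^ r * ((1 - ω₀) * ρ)) * (∑' m : ℕ, ((m : ℝ) * D) ^ r * (1 - ρ) ^ m) := by
      rw [hbd, Summable.tsum_add (hsumgeo.mul_left _) (hsumP.mul_left _), tsum_mul_left,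
        tsum_mul_left, hgeosum]
    rw [e1]
    have e2 : (3 ^ r * ((1 - ω₀) * ρ) * (A ^ r + B ^ r)) * ρ⁻¹ =
        3 ^ r * (1 - ω₀) * (A ^ r + B ^ r) := by
      field_simp
    have e3 : (3 ^ r * ((1 - ω₀) * ρ)) * (∑' m : ℕ, ((m : ℝ) * D) ^ r * (1 - ρ) ^ m) ≤
        3 ^ r * (1 - ω₀) * K := by
      have hc : (0:ℝ) ≤ 3 ^ r * ((1 - ω₀) * ρ) := by positivity
      have h5 : ∑' m : ℕ, ((m : ℝ) * D) ^ r * (1 - ρ) ^ m ≤ (2 * r / Real.exp 1) ^ r * (2 / ρ) := by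
        calc ∑' m : ℕ, ((m : ℝ) * D) ^ r * (1 - ρ) ^ m
            ≤ (2 * r / Real.exp 1) ^ r * (1 - s)⁻¹ := hP
          _ ≤ (2 * r / Real.exp 1) ^ r * (2 / ρ) :=
              mul_le_mul_of_nonneg_left hinv (by positivity)
      calc (3 ^ r * ((1 - ω₀) * ρ)) * (∑' m : ℕ, ((m : ℝ) * D) ^ r * (1 - ρ) ^ m)
          ≤ (3 ^ r * ((1 - ω₀) * ρ)) * ((2 * r / Real.exp 1) ^ r * (2 / ρ)) :=
            mul_le_mul_of_nonneg_left h5 hc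
        _ = 3 ^ r * (1 - ω₀) * K := by
            rw [hKdef]; field_simp
    linarith [e3, e2.le]
  -- lower bound on B^r + D^r/ρ
  have hBD : Real.log 2 ^ r ≤ B ^ r + D ^ r / ρ := by
    have hl2 : (0:ℝ) ≤ Real.log 2 := (Real.log_pos one_lt_two).le
    rcases le_or_gt ρ (1/2) with h | h
    · have h1 : Real.log ρ ≤ Real.log (1/2) := Real.log_le_log hρ0 h
      have h2 : Real.log (1/2) = -Real.log 2 := by
        rw [Real.log_div one_ne_zero two_ne_zero, Real.log_one]; ring
      have h3 : Real.log 2 ≤ B := by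
        rw [hB]
        calc Real.log 2 ≤ -Real.log ρ := by rw [h2] at h1; linarith
          _ ≤ |Real.log ρ| := neg_le_abs _
      have h4 : Real.log 2 ^ r ≤ B ^ r := Real.rpow_le_rpow hl2 h3 hr0.le
      have h5 : (0:ℝ) ≤ D ^ r / ρ := by positivity
      linarith
    · have h1 : Real.log (1 - ρ) ≤ Real.log (1/2) := Real.log_le_log h1ρ (by linarith)
      have h2 : Real.log (1/2) = -Real.log 2 := by
        rw [Real.log_div one_ne_zero two_ne_zero, Real.log_one]; ring
      have h3 : Real.log 2 ≤ D := by
        rw [hDdef, abs_of_neg hlogρneg]; rw [h2] at h1; linarith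
      have h4 : Real.log 2 ^ r ≤ D ^ r := Real.rpow_le_rpow hl2 h3 hr0.le
      have h6 : (0:ℝ) ≤ B ^ r := Real.rpow_nonneg (abs_nonneg _) r
      have h7 : D ^ r ≤ D ^ r / ρ := by
        rw [le_div_iff₀ hρ0]
        nlinarith [Real.rpow_nonneg (le_trans hl2 h3) r]
      linarith
  -- final combination
  set L2 : ℝ := Real.log 2 ^ r with hL2def
  have hq : (0:ℝ) ≤ K / L2 := by positivity
  have hKle : K ≤ (K / L2) * (B ^ r + D ^ r / ρ) := by
    have e : K = (K / L2) * L2 := by field_simp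
    calc K = (K / L2) * L2 := e
      _ ≤ (K / L2) * (B ^ r + D ^ r / ρ) := mul_le_mul_of_nonneg_left hBD hq
  have hEnn : (0:ℝ) ≤ D ^ r / ρ := by positivity
  have hAnn : (0:ℝ) ≤ A ^ r := Real.rpow_nonneg (abs_nonneg _) r
  have hBnn : (0:ℝ) ≤ B ^ r := Real.rpow_nonneg (abs_nonneg _) r
  have hmain : A ^ r + B ^ r + K ≤ (1 + K / L2) * (A ^ r + B ^ r + D ^ r / ρ) :=
    aux_comb (K / L2) (A ^ r) (B ^ r) (D ^ r / ρ) K hq hAnn hKle hEnn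
  have hmul : 3 ^ r * (1 - ω₀) * (A ^ r + B ^ r + K) ≤
      (1 - ω₀) * (3 ^ r * (1 + K / L2)) * (A ^ r + B ^ r + D ^ r / ρ) := by
    have h0 : (0:ℝ) ≤ 3 ^ r * (1 - ω₀) := by positivity
    calc 3 ^ r * (1 - ω₀) * (A ^ r + B ^ r + K)
        ≤ 3 ^ r * (1 - ω₀) * ((1 + K / L2) * (A ^ r + B ^ r + D ^ r / ρ)) :=
          mul_le_mul_of_nonneg_left hmain h0
      _ = (1 - ω₀) * (3 ^ r * (1 + K / L2)) * (A ^ r + B ^ r + D ^ r / ρ) := by ring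
  have hf0 : f 0 = |Real.log ω₀| ^ r * ω₀ := by simp [hf, zmGeom]
  calc ∑' k : ℕ, f k = f 0 + ∑' m : ℕ, f (m + 1) := Summable.tsum_eq_zero_add hsumf
    _ ≤ f 0 + ∑' m : ℕ, bound m := by
        have := Summable.tsum_le_tsum hterm hsumshift hsumbound
        linarith
    _ ≤ |Real.log ω₀| ^ r * ω₀ + 3 ^ r * (1 - ω₀) * (A ^ r + B ^ r + K) := by
        rw [hf0]; linarith
    _ ≤ ω₀ * |Real.log ω₀| ^ r +
        (1 - ω₀) * (3 ^ r * (1 + K / L2)) * (A ^ r + B ^ r + D ^ r / ρ) := by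
        rw [mul_comm]; linarith

set_option maxHeartbeats 1000000 in
theorem stmt16 (r : ℝ) (hr : 1 ≤ r) :
    (∃ C > 0, ∀ ω₀ ρ : ℝ, 0 < ω₀ → ω₀ < 1 → 0 < ρ → ρ < 1 →
      ∑' k : ℕ, |Real.log (zmGeom ω₀ ρ k)| ^ r * zmGeom ω₀ ρ k
        ≤ ω₀ * |Real.log ω₀| ^ r +
          (1 - ω₀) * C *
            (|Real.log (1 - ω₀)| ^ r + |Real.log ρ| ^ r + |Real.log (1 - ρ)| ^ r / ρ)) ∧
    (∀ ω₀ : ℝ, 0 < ω₀ → ω₀ < 1 → ∀ α ρ : ℕ → ℝ,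
      (∀ n, 0 < α n ∧ α n < 1) → (∀ n, 0 < ρ n ∧ ρ n < 1) →
      Tendsto ρ atTop (nhds 0) →
      Tendsto (fun n => |Real.log (ρ n)| / |Real.log (α n)|) atTop (nhds 0) →
      Tendsto (fun n =>
          (∑' k : ℕ, |Real.log (zmGeom ω₀ (ρ n) k)| ^ r * zmGeom ω₀ (ρ n) k) /
            |Real.log (α n)| ^ r) atTop (nhds 0)) := by
  obtain ⟨C, hC, hbound⟩ := key r hr
  refine ⟨⟨C, hC, hbound⟩, ?_⟩
  intro ω₀ hω0 hω1 α ρ hα hρmem hρ0 hratio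
  have hr0 : (0:ℝ) < r := lt_of_lt_of_le one_pos hr
  set L : ℕ → ℝ := fun n => |Real.log (α n)| with hLdef
  have hLpos : ∀ n, 0 < L n := fun n =>
    abs_pos.mpr (ne_of_lt (Real.log_neg (hα n).1 (hα n).2))
  have hlogρ : Tendsto (fun n => Real.log (ρ n)) atTop atBot := by
    apply Real.tendsto_log_nhdsGT_zero.comp
    exact tendsto_nhdsWithin_of_tendsto_nhds_of_eventually_within _ hρ0
      (Eventually.of_forall fun n => (hρmem n).1)
  have hBtop : Tendsto (fun n => |Real.log (ρ n)|) atTop atTop := by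
    have heq : ∀ n, |Real.log (ρ n)| = -Real.log (ρ n) := fun n =>
      abs_of_neg (Real.log_neg (hρmem n).1 (hρmem n).2)
    have := tendsto_neg_atBot_atTop.comp hlogρ
    apply this.congr
    intro n
    exact (heq n).symm
  have hLtop : Tendsto L atTop atTop := by
    apply tendsto_atTop_mono' atTop _ hBtop
    filter_upwards [hratio.eventually (gt_mem_nhds one_pos)] with n hn
    exact ((div_lt_one (hLpos n)).mp hn).le
  have hLr : Tendsto (fun n => L n ^ r) atTop atTop := (tendsto_rpow_atTop hr0).comp hLtop
  set A := |Real.log (1 - ω₀)| with hA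
  have hT1 : Tendsto
      (fun n => (ω₀ * |Real.log ω₀| ^ r + (1 - ω₀) * C * A ^ r) / L n ^ r) atTop (nhds 0) :=
    tendsto_const_nhds.div_atTop hLr
  have hT2 : Tendsto (fun n => (1 - ω₀) * C * (|Real.log (ρ n)| / L n) ^ r) atTop (nhds 0) := by
    have h1 : Tendsto (fun n => (|Real.log (ρ n)| / L n) ^ r) atTop (nhds 0) := by
      have := hratio.rpow_const (Or.inr hr0.le)
      simpa [Real.zero_rpow (ne_of_gt hr0)] using this
    simpa using h1.const_mul ((1 - ω₀) * C)
  have hT3 : Tendsto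
      (fun n => (1 - ω₀) * C * (|Real.log (1 - ρ n)| ^ r / ρ n) / L n ^ r) atTop (nhds 0) := by
    have hub : ∀ᶠ n in atTop,
        (1 - ω₀) * C * (|Real.log (1 - ρ n)| ^ r / ρ n) / L n ^ r ≤
          ((1 - ω₀) * C * 2 ^ r) / L n ^ r := by
      filter_upwards [hρ0.eventually (gt_mem_nhds (by norm_num : (0:ℝ) < 1/2))] with n hn
      have hρp := (hρmem n).1
      have hρl := (hρmem n).2
      have hpos : (0:ℝ) < 1 - ρ n := by linarith
      have hlog := Real.log_le_sub_one_of_pos (inv_pos.mpr hpos)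
      rw [Real.log_inv] at hlog
      have habs : |Real.log (1 - ρ n)| = -Real.log (1 - ρ n) :=
        abs_of_neg (Real.log_neg hpos (by linarith))
      have h1 : |Real.log (1 - ρ n)| ≤ 2 * ρ n := by
        rw [habs]
        nlinarith [mul_inv_cancel₀ (ne_of_gt hpos)]
      have h2 : |Real.log (1 - ρ n)| ^ r / ρ n ≤ 2 ^ r := by
        calc |Real.log (1 - ρ n)| ^ r / ρ n ≤ (2 * ρ n) ^ r / ρ n :=
              div_le_div_of_nonneg_right'' (Real.rpow_le_rpow (abs_nonneg _) h1 hr0.le) hρp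
          _ = 2 ^ r * (ρ n ^ r / ρ n) := by
              rw [Real.mul_rpow (by norm_num) hρp.le]; ring
          _ = 2 ^ r * ρ n ^ (r - 1) := by rw [Real.rpow_sub_one (ne_of_gt hρp)]
          _ ≤ 2 ^ r * 1 :=
              mul_le_mul_of_nonneg_left (Real.rpow_le_one hρp.le hρl.le (by linarith))
                (Real.rpow_nonneg (by norm_num) r)
          _ = 2 ^ r := mul_one _
      exact div_le_div_of_nonneg_right''
        (mul_le_mul_of_nonneg_left h2 (mul_nonneg (by linarith) hC.le))
        (Real.rpow_pos_of_pos (hLpos n) r)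
    have hlb : ∀ᶠ n in atTop,
        (0:ℝ) ≤ (1 - ω₀) * C * (|Real.log (1 - ρ n)| ^ r / ρ n) / L n ^ r := by
      apply Eventually.of_forall
      intro n
      have hρp := (hρmem n).1
      have h1ω : (0:ℝ) < 1 - ω₀ := by linarith
      have hLp := hLpos n
      positivity
    exact tendsto_of_tendsto_of_tendsto_of_le_of_le' tendsto_const_nhds
      (tendsto_const_nhds.div_atTop hLr) hlb hub
  have hh : Tendsto (fun n =>
      (ω₀ * |Real.log ω₀| ^ r + (1 - ω₀) * C * A ^ r) / L n ^ r +
        (1 - ω₀) * C * (|Real.log (ρ n)| / L n) ^ r +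
        (1 - ω₀) * C * (|Real.log (1 - ρ n)| ^ r / ρ n) / L n ^ r) atTop (nhds 0) := by
    have := (hT1.add hT2).add hT3
    simpa using this
  apply tendsto_of_tendsto_of_tendsto_of_le_of_le' tendsto_const_nhds hh
  · apply Eventually.of_forall
    intro n
    exact div_nonneg
      (tsum_nonneg fun k => mul_nonneg (Real.rpow_nonneg (abs_nonneg _) _)
        (zm_nonneg _ _ hω0 hω1 (hρmem n).1 (hρmem n).2 k))
      (Real.rpow_nonneg (abs_nonneg _) _)
  · apply Eventually.of_forall
    intro n
    have hb := hbound ω₀ (ρ n) hω0 hω1 (hρmem n).1 (hρmem n).2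
    have hLrpos : 0 < L n ^ r := Real.rpow_pos_of_pos (hLpos n) r
    have step1 : (∑' k : ℕ, |Real.log (zmGeom ω₀ (ρ n) k)| ^ r * zmGeom ω₀ (ρ n) k) / L n ^ r ≤
        (ω₀ * |Real.log ω₀| ^ r + (1 - ω₀) * C *
          (A ^ r + |Real.log (ρ n)| ^ r + |Real.log (1 - ρ n)| ^ r / ρ n)) / L n ^ r :=
      div_le_div_of_nonneg_right'' hb hLrpos
    have heq : (ω₀ * |Real.log ω₀| ^ r + (1 - ω₀) * C *
          (A ^ r + |Real.log (ρ n)| ^ r + |Real.log (1 - ρ n)| ^ r / ρ n)) / L n ^ r =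
        (ω₀ * |Real.log ω₀| ^ r + (1 - ω₀) * C * A ^ r) / L n ^ r +
          (1 - ω₀) * C * (|Real.log (ρ n)| / L n) ^ r +
          (1 - ω₀) * C * (|Real.log (1 - ρ n)| ^ r / ρ n) / L n ^ r := by
      rw [Real.div_rpow (abs_nonneg _) (abs_nonneg _)]
      ring
    rw [heq] at step1
    exact step1
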